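/- Let r and ω be positive integers and let p : ℝ^r → ℝ be a homogeneous polynomial of degree ω whose vector of monomial coefficients has Euclidean norm 1 (i.e., p(x) = Σ_{|α|=ω} c_α x^α with Σ_α c_α² = 1). Then E_{g∼N(0,I_r)}[p(g)²] ≥ ω^{−ω/2}. -/

import Mathlib

open MeasureTheory ProbabilityTheory

/-- The standard Gaussian measure `N(0, I_r)` on `ℝ^r`, i.e. the product of `r`
copies of the standard one-dimensional Gaussian. -/
noncomputable def gaussianPi (r : ℕ) : Measure (Fin r → ℝ) :=
  Measure.pi fun _ => gaussianReal 0 1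

open Polynomial Real
open scoped ENNReal NNReal

noncomputable section GaussAux

local notation "γ₁" => gaussianReal 0 1

lemma gpdf_eq (x : ℝ) : gaussianPDFReal 0 1 x = (√(2 * π))⁻¹ * rexp (-(x ^ 2) / 2) := by
  simp [gaussianPDFReal]

lemma gauss_integral_eq (f : ℝ → ℝ) :
    ∫ x, f x ∂γ₁ = ∫ x, gaussianPDFReal 0 1 x * f x := by
  rw [gaussianReal_of_var_ne_zero 0 one_ne_zero]
  rw [show gaussianPDF 0 1 = fun x => ((fun y => (gaussianPDFReal 0 1 y).toNNReal) x : ℝ≥0∞) from rfl]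
  rw [integral_withDensity_eq_integral_smul
    ((measurable_gaussianPDFReal 0 1).real_toNNReal)]
  congr 1; ext x
  simp [NNReal.smul_def, Real.coe_toNNReal _ (gaussianPDFReal_nonneg 0 1 x)]

lemma gauss_integrable_iff (f : ℝ → ℝ) :
    Integrable f γ₁ ↔ Integrable (fun x => gaussianPDFReal 0 1 x * f x) volume := by
  rw [gaussianReal_of_var_ne_zero 0 one_ne_zero]
  rw [show gaussianPDF 0 1 = fun x => ((fun y => (gaussianPDFReal 0 1 y).toNNReal) x : ℝ≥0∞) from rfl]
  rw [integrable_withDensity_iff_integrable_coe_smul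
    ((measurable_gaussianPDFReal 0 1).real_toNNReal)]
  constructor <;> intro h <;> refine h.congr (Filter.Eventually.of_forall fun x => ?_) <;>
    simp [NNReal.smul_def, Real.coe_toNNReal _ (gaussianPDFReal_nonneg 0 1 x)]

lemma integrable_pow_gauss (n : ℕ) :
    Integrable (fun x : ℝ => gaussianPDFReal 0 1 x * x ^ n) volume := by
  have h := integrable_rpow_mul_exp_neg_mul_sq (b := (2:ℝ)⁻¹) (by norm_num) (s := (n:ℝ))
    (neg_one_lt_zero.trans_le (Nat.cast_nonneg n))
  refine (h.const_mul (√(2 * π))⁻¹).congr (Filter.Eventually.of_forall fun x => ?_)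
  simp only [gpdf_eq]
  rw [show -(x^2)/2 = -2⁻¹ * x^2 by ring, Real.rpow_natCast]
  ring

lemma integrable_poly_gauss (P : Polynomial ℝ) :
    Integrable (fun x => P.eval x) γ₁ := by
  rw [gauss_integrable_iff]
  induction P using Polynomial.induction_on' with
  | add p q hp hq =>
      refine (hp.add hq).congr (Filter.Eventually.of_forall fun x => ?_)
      simp [mul_add]
  | monomial n a =>
      refine ((integrable_pow_gauss n).const_mul a).congr
        (Filter.Eventually.of_forall fun x => ?_)
      simp; ring

end GaussAux

noncomputable section Stein

open Filter

local notation "γ₁" => gaussianReal 0 1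

lemma hasDerivAt_gpdf (x : ℝ) :
    HasDerivAt (gaussianPDFReal 0 1) (-x * gaussianPDFReal 0 1 x) x := by
  have h : HasDerivAt (fun y : ℝ => -(y ^ 2) / 2) (-x) x := by
    have := ((hasDerivAt_pow 2 x).neg.div_const 2)
    refine this.congr_deriv ?_
    simp; ring
  have h2 := (h.exp).const_mul (√(2 * π))⁻¹
  have hfun : gaussianPDFReal 0 1 = fun x => (√(2 * π))⁻¹ * rexp (-(x ^ 2) / 2) :=
    funext gpdf_eq
  rw [hfun]
  refine h2.congr_deriv ?_
  show _ = -x * ((√(2 * π))⁻¹ * rexp (-(x ^ 2) / 2))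
  ring

lemma tendsto_pow_gpdf_atTop (k : ℕ) :
    Tendsto (fun x : ℝ => x ^ k * gaussianPDFReal 0 1 x) atTop (nhds 0) := by
  have hexp : Tendsto (fun x : ℝ => rexp (-(1/2) * x)) atTop (nhds 0) := by
    have h0 : Tendsto (fun x : ℝ => (1/2 : ℝ) * x) atTop atTop :=
      Tendsto.const_mul_atTop (by norm_num) tendsto_id
    have := Real.tendsto_exp_neg_atTop_nhds_zero.comp h0
    simpa [Function.comp_def, neg_mul] using this
  have h1 : Tendsto (fun x : ℝ => x ^ (k:ℝ) * rexp (-2⁻¹ * x ^ 2)) atTop (nhds 0) :=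
    (rpow_mul_exp_neg_mul_sq_isLittleO_exp_neg (by norm_num) (k:ℝ)).isBigO.trans_tendsto
      hexp
  have h2 := h1.const_mul (√(2 * π))⁻¹
  rw [mul_zero] at h2
  refine h2.congr fun x => ?_
  rw [gpdf_eq, Real.rpow_natCast, show -(x^2)/2 = -2⁻¹ * x^2 by ring]
  ring

lemma tendsto_poly_gpdf_atTop (P : Polynomial ℝ) :
    Tendsto (fun x : ℝ => P.eval x * gaussianPDFReal 0 1 x) atTop (nhds 0) := by
  have : ∀ x : ℝ, P.eval x * gaussianPDFReal 0 1 x =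
      ∑ k ∈ Finset.range (P.natDegree + 1), P.coeff k * (x ^ k * gaussianPDFReal 0 1 x) := by
    intro x
    rw [Polynomial.eval_eq_sum_range, Finset.sum_mul]
    simp [mul_assoc]
  simp only [this]
  have := tendsto_finset_sum (Finset.range (P.natDegree + 1))
    (fun k _ => ((tendsto_pow_gpdf_atTop k).const_mul (P.coeff k)))
  simpa using this

lemma tendsto_poly_gpdf_atBot (P : Polynomial ℝ) :
    Tendsto (fun x : ℝ => P.eval x * gaussianPDFReal 0 1 x) atBot (nhds 0) := by
  have h := (tendsto_poly_gpdf_atTop (P.comp (-X))).comp tendsto_neg_atBot_atTop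
  refine h.congr fun x => ?_
  simp only [Function.comp_apply, Polynomial.eval_comp, Polynomial.eval_neg, Polynomial.eval_X,
    neg_neg]
  congr 1
  rw [gpdf_eq, gpdf_eq, neg_sq]

lemma integrable_poly_pdf (P : Polynomial ℝ) :
    Integrable (fun x => gaussianPDFReal 0 1 x * P.eval x) volume :=
  (gauss_integrable_iff _).mp (integrable_poly_gauss P)

/-- Gaussian integration by parts (Stein's identity) for polynomials. -/
lemma stein (P : Polynomial ℝ) :
    ∫ x, (X * P).eval x ∂γ₁ = ∫ x, (derivative P).eval x ∂γ₁ := by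
  rw [gauss_integral_eq, gauss_integral_eq, ← sub_eq_zero,
    ← integral_sub (integrable_poly_pdf _) (integrable_poly_pdf _)]
  have hderiv : ∀ x : ℝ, HasDerivAt (fun y => -(P.eval y * gaussianPDFReal 0 1 y))
      (gaussianPDFReal 0 1 x * (X * P).eval x -
        gaussianPDFReal 0 1 x * (derivative P).eval x) x := by
    intro x
    have := ((P.hasDerivAt x).mul (hasDerivAt_gpdf x)).neg
    refine this.congr_deriv ?_
    simp only [Polynomial.eval_mul, Polynomial.eval_X]
    ring
  have hint : Integrable (fun x => gaussianPDFReal 0 1 x * (X * P).eval x -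
      gaussianPDFReal 0 1 x * (derivative P).eval x) volume :=
    (integrable_poly_pdf _).sub (integrable_poly_pdf _)
  rw [integral_of_hasDerivAt_of_tendsto hderiv hint
    (by simpa using (tendsto_poly_gpdf_atBot P).neg)
    (by simpa using (tendsto_poly_gpdf_atTop P).neg)]
  simp

end Stein

noncomputable section Herm

local notation "γ₁" => gaussianReal 0 1

/-- Real probabilists' Hermite polynomial. -/
def He (n : ℕ) : Polynomial ℝ := (hermite n).map (Int.castRingHom ℝ)

lemma He_succ (n : ℕ) : He (n + 1) = X * He n - derivative (He n) := by
  unfold He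
  rw [hermite_succ]
  simp [Polynomial.derivative_map]

lemma He_zero : He 0 = 1 := by unfold He; simp

lemma derivative_He (n : ℕ) : derivative (He (n + 1)) = ((n : ℝ) + 1) • He n := by
  induction n with
  | zero => rw [He_succ, He_zero]; simp
  | succ n ih =>
      rw [He_succ (n+1), derivative_sub, derivative_mul, derivative_X, ih]
      rw [derivative_smul, mul_smul_comm, add_sub_assoc, ← smul_sub, ← He_succ, one_mul]
      push_cast
      module

/-- Integral of a polynomial against the standard Gaussian. -/
def Pint (P : Polynomial ℝ) : ℝ := ∫ x, P.eval x ∂γ₁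

lemma Pint_add (P Q : Polynomial ℝ) : Pint (P + Q) = Pint P + Pint Q := by
  unfold Pint
  simp only [eval_add]
  exact integral_add (integrable_poly_gauss P) (integrable_poly_gauss Q)

lemma Pint_sub (P Q : Polynomial ℝ) : Pint (P - Q) = Pint P - Pint Q := by
  unfold Pint
  simp only [eval_sub]
  exact integral_sub (integrable_poly_gauss P) (integrable_poly_gauss Q)

lemma Pint_smul (c : ℝ) (P : Polynomial ℝ) : Pint (c • P) = c * Pint P := by
  unfold Pint
  simp only [eval_smul, smul_eq_mul]
  exact integral_const_mul c _

lemma Pint_zero : Pint 0 = 0 := by unfold Pint; simp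

lemma Pint_one : Pint 1 = 1 := by
  unfold Pint
  simp

/-- The key step: integrating `He (a+1) * Q` by parts. -/
lemma Pint_He_succ_mul (a : ℕ) (Q : Polynomial ℝ) :
    Pint (He (a + 1) * Q) = Pint (He a * derivative Q) := by
  have h1 : He (a + 1) * Q = X * (He a * Q) - derivative (He a) * Q := by
    rw [He_succ]; ring
  have h2 := stein (He a * Q)
  have h3 : derivative (He a * Q) = derivative (He a) * Q + He a * derivative Q :=
    derivative_mul
  rw [h1, Pint_sub]
  show Pint (X * (He a * Q)) - _ = _
  rw [show Pint (X * (He a * Q)) = Pint (derivative (He a * Q)) from h2, h3, Pint_add]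
  ring

def Jint (a b : ℕ) : ℝ := Pint (He a * X ^ b)

def Iint (a b : ℕ) : ℝ := Pint (He a * He b)

lemma Jint_succ_succ (a b : ℕ) : Jint (a + 1) (b + 1) = ((b : ℝ) + 1) * Jint a b := by
  unfold Jint
  rw [Pint_He_succ_mul, derivative_X_pow]
  have h : He a * (C (((b+1 : ℕ)) : ℝ) * X ^ (b + 1 - 1)) = ((b : ℝ) + 1) • (He a * X ^ b) := by
    simp [smul_eq_C_mul]
    push_cast
    ring
  rw [h, Pint_smul]

lemma Jint_succ_zero (a : ℕ) : Jint (a + 1) 0 = 0 := by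
  unfold Jint
  rw [Pint_He_succ_mul]
  simp [Pint_zero]

lemma Jint_self (a : ℕ) : Jint a a = (a.factorial : ℝ) := by
  induction a with
  | zero => unfold Jint; rw [He_zero]; simpa using Pint_one
  | succ a ih => rw [Jint_succ_succ, ih]; push_cast [Nat.factorial_succ]; ring

lemma Jint_eq_zero_of_lt {a b : ℕ} (h : b < a) : Jint a b = 0 := by
  induction a generalizing b with
  | zero => omega
  | succ a ih =>
      cases b with
      | zero => exact Jint_succ_zero a
      | succ b => rw [Jint_succ_succ, ih (by omega)]; ring

lemma Iint_symm (a b : ℕ) : Iint a b = Iint b a := by unfold Iint; rw [mul_comm]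

lemma Iint_succ_zero (a : ℕ) : Iint (a + 1) 0 = 0 := by
  unfold Iint
  rw [Pint_He_succ_mul, He_zero]
  simp [Pint_zero]

lemma Iint_succ_succ (a b : ℕ) : Iint (a + 1) (b + 1) = ((b : ℝ) + 1) * Iint a b := by
  unfold Iint
  rw [Pint_He_succ_mul, derivative_He]
  rw [show He a * (((b:ℝ) + 1) • He b) = ((b:ℝ)+1) • (He a * He b) from
    (mul_smul_comm _ _ _), Pint_smul]

lemma Iint_eq (a b : ℕ) : Iint a b = if a = b then (a.factorial : ℝ) else 0 := by
  induction a generalizing b with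
  | zero =>
      cases b with
      | zero => unfold Iint; rw [He_zero]; simpa using Pint_one
      | succ b => rw [Iint_symm, Iint_succ_zero]; simp
  | succ a ih =>
      cases b with
      | zero => rw [Iint_succ_zero]; simp
      | succ b =>
          rw [Iint_succ_succ, ih b]
          by_cases h : a = b <;> simp [h, Nat.factorial_succ] <;> push_cast <;> ring

end Herm

noncomputable section Multi

open MvPolynomial

variable {r : ℕ}

lemma integral_pi_prod (f : Fin r → ℝ → ℝ) :
    ∫ g : Fin r → ℝ, ∏ i, f i (g i) ∂(Measure.pi fun _ => gaussianReal 0 1)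
      = ∏ i, ∫ x, f i x ∂(gaussianReal 0 1) := by
  letI : MeasureSpace ℝ := { volume := gaussianReal 0 1 }
  haveI : SigmaFinite (volume : Measure ℝ) := by
    show SigmaFinite (gaussianReal 0 1); infer_instance
  exact MeasureTheory.integral_fintype_prod_eq_prod f

lemma integrable_pi_prod (f : Fin r → ℝ → ℝ)
    (hf : ∀ i, Integrable (f i) (gaussianReal 0 1)) :
    Integrable (fun g : Fin r → ℝ => ∏ i, f i (g i))
      (Measure.pi fun _ => gaussianReal 0 1) := by
  letI : MeasureSpace ℝ := { volume := gaussianReal 0 1 }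
  haveI : SigmaFinite (volume : Measure ℝ) := by
    show SigmaFinite (gaussianReal 0 1); infer_instance
  exact MeasureTheory.Integrable.fintype_prod hf

/-- `∏ i (α i)!`. -/
def Af (α : Fin r →₀ ℕ) : ℝ := ∏ i, ((α i).factorial : ℝ)

lemma one_le_Af (α : Fin r →₀ ℕ) : 1 ≤ Af α := by
  have h := Finset.prod_le_prod (s := Finset.univ) (f := fun _ : Fin r => (1:ℝ))
    (g := fun i => ((α i).factorial : ℝ))
    (fun i _ => zero_le_one) (fun i _ => Nat.one_le_cast.mpr (α i).factorial_pos)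
  simpa [Af] using h

/-- Hermite multi-monomial. -/
def Hf (α : Fin r →₀ ℕ) : (Fin r → ℝ) → ℝ := fun g => ∏ i, (He (α i)).eval (g i)

/-- Plain monomial. -/
def Xf (α : Fin r →₀ ℕ) : (Fin r → ℝ) → ℝ := fun g => ∏ i, g i ^ α i

lemma integrable_HH (α β : Fin r →₀ ℕ) :
    Integrable (fun g => Hf α g * Hf β g) (Measure.pi fun _ => gaussianReal 0 1) := by
  have h := integrable_pi_prod (fun i => fun x => (He (α i) * He (β i)).eval x)
    (fun i => integrable_poly_gauss _)
  refine h.congr (Filter.Eventually.of_forall fun g => ?_)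
  simp [Hf, Finset.prod_mul_distrib]

lemma integrable_HX (α β : Fin r →₀ ℕ) :
    Integrable (fun g => Hf α g * Xf β g) (Measure.pi fun _ => gaussianReal 0 1) := by
  have h := integrable_pi_prod (fun i => fun x => (He (α i) * Polynomial.X ^ β i).eval x)
    (fun i => integrable_poly_gauss _)
  refine h.congr (Filter.Eventually.of_forall fun g => ?_)
  simp [Hf, Xf, Finset.prod_mul_distrib]

lemma integrable_XX (α β : Fin r →₀ ℕ) :
    Integrable (fun g => Xf α g * Xf β g) (Measure.pi fun _ => gaussianReal 0 1) := by
  have h := integrable_pi_prod (fun i => fun x => ((Polynomial.X : Polynomial ℝ) ^ α i * Polynomial.X ^ β i).eval x)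
    (fun i => integrable_poly_gauss _)
  refine h.congr (Filter.Eventually.of_forall fun g => ?_)
  simp [Xf, Finset.prod_mul_distrib]

lemma integral_HH (α β : Fin r →₀ ℕ) :
    ∫ g, Hf α g * Hf β g ∂(Measure.pi fun _ => gaussianReal 0 1)
      = if α = β then Af α else 0 := by
  set F : Fin r → ℝ → ℝ := fun i x => (He (α i)).eval x * (He (β i)).eval x with hF
  have h1 : (fun g : Fin r → ℝ => Hf α g * Hf β g)
      = fun g => ∏ i, F i (g i) := by
    funext g
    simp [Hf, hF, Finset.prod_mul_distrib]
  rw [h1, integral_pi_prod F]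
  have h2 : ∀ i : Fin r, ∫ x, F i x ∂(gaussianReal 0 1)
      = if α i = β i then (((α i).factorial : ℝ)) else 0 := by
    intro i
    have := Iint_eq (α i) (β i)
    unfold Iint Pint at this
    simpa using this
  simp only [h2]
  by_cases h : α = β
  · subst h
    simp [Af]
  · have : ∃ i, α i ≠ β i := by
      by_contra hc
      push_neg at hc
      exact h (Finsupp.ext hc)
    obtain ⟨i, hi⟩ := this
    rw [if_neg h]
    exact Finset.prod_eq_zero (Finset.mem_univ i) (by rw [if_neg hi])

lemma integral_HX {ω : ℕ} (α β : Fin r →₀ ℕ)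
    (hα : ∑ i, α i = ω) (hβ : ∑ i, β i = ω) :
    ∫ g, Hf α g * Xf β g ∂(Measure.pi fun _ => gaussianReal 0 1)
      = if α = β then Af α else 0 := by
  set F : Fin r → ℝ → ℝ := fun i x => (He (α i)).eval x * x ^ β i with hF
  have h1 : (fun g : Fin r → ℝ => Hf α g * Xf β g)
      = fun g => ∏ i, F i (g i) := by
    funext g
    simp [Hf, Xf, hF, Finset.prod_mul_distrib]
  rw [h1, integral_pi_prod F]
  have h2 : ∀ i : Fin r, ∫ x, F i x ∂(gaussianReal 0 1)
      = Jint (α i) (β i) := by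
    intro i
    unfold Jint Pint
    simp [hF]
  simp only [h2]
  by_cases h : α = β
  · subst h
    rw [if_pos rfl]
    unfold Af
    exact Finset.prod_congr rfl fun i _ => Jint_self (α i)
  · rw [if_neg h]
    have hex : ∃ i, β i < α i := by
      by_contra hc
      push_neg at hc
      have hall : ∀ i ∈ Finset.univ, α i = β i := by
        rw [← Finset.sum_eq_sum_iff_of_le (fun i _ => hc i)]
        rw [hα, hβ]
      exact h (Finsupp.ext fun i => hall i (Finset.mem_univ i))
    obtain ⟨i, hi⟩ := hex
    exact Finset.prod_eq_zero (Finset.mem_univ i) (Jint_eq_zero_of_lt hi)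

end Multi

/-- For a homogeneous degree-`ω` polynomial `p` whose coefficient vector has unit
Euclidean norm, `E_{g∼N(0,I_r)}[p(g)²] ≥ ω^{−ω/2}`. -/
theorem gaussian_second_moment_homogeneous_poly (r ω : ℕ) (hr : 0 < r) (hω : 0 < ω)
    (p : MvPolynomial (Fin r) ℝ) (hp : p.IsHomogeneous ω)
    (hcoef : ∑ α ∈ p.support, MvPolynomial.coeff α p ^ 2 = 1) :
    (ω : ℝ) ^ (-(ω : ℝ) / 2) ≤ ∫ g, MvPolynomial.eval g p ^ 2 ∂(gaussianPi r) := by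
  classical
  set μ := (Measure.pi fun _ : Fin r => gaussianReal 0 1) with hμ
  set S := p.support with hS
  set c : (Fin r →₀ ℕ) → ℝ := fun α => MvPolynomial.coeff α p with hc
  set f : (Fin r → ℝ) → ℝ := fun g => MvPolynomial.eval g p with hf
  set q : (Fin r → ℝ) → ℝ := fun g => ∑ α ∈ S, c α * Hf α g with hq
  -- degrees
  have hdeg : ∀ α ∈ S, ∑ i, α i = ω := by
    intro α hα
    have h := hp (MvPolynomial.mem_support_iff.mp hα)
    rw [← h, Finsupp.weight_apply, Finsupp.sum_fintype]
    · exact Finset.sum_congr rfl fun i _ => by simp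
    · intro i; simp
  -- pointwise expansion of p
  have hfX : ∀ g : Fin r → ℝ, f g = ∑ α ∈ S, c α * Xf α g := by
    intro g
    rw [hf]
    simp only
    rw [MvPolynomial.eval_eq]
    refine Finset.sum_congr rfl fun α hα => ?_
    congr 1
    show ∏ i ∈ α.support, g i ^ α i = ∏ i, g i ^ α i
    exact Finset.prod_subset (Finset.subset_univ _) (fun i _ hi => by
      rw [Finsupp.notMem_support_iff.mp hi, pow_zero])
  -- expansions of the three products
  have hexp_qq : (fun g => q g * q g)
      = fun g => ∑ α ∈ S, ∑ β ∈ S, (c α * c β) * (Hf α g * Hf β g) := by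
    funext g
    rw [hq]
    simp only
    rw [Finset.sum_mul_sum]
    exact Finset.sum_congr rfl fun α _ => Finset.sum_congr rfl fun β _ => by ring
  have hexp_qf : (fun g => q g * f g)
      = fun g => ∑ α ∈ S, ∑ β ∈ S, (c α * c β) * (Hf α g * Xf β g) := by
    funext g
    rw [hq, hfX g]
    simp only
    rw [Finset.sum_mul_sum]
    exact Finset.sum_congr rfl fun α _ => Finset.sum_congr rfl fun β _ => by ring
  have hexp_ff : (fun g => f g ^ 2)
      = fun g => ∑ α ∈ S, ∑ β ∈ S, (c α * c β) * (Xf α g * Xf β g) := by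
    funext g
    rw [sq, hfX g, Finset.sum_mul_sum]
    exact Finset.sum_congr rfl fun α _ => Finset.sum_congr rfl fun β _ => by ring
  -- integrability
  have hint_qq : Integrable (fun g => q g * q g) μ := by
    rw [hexp_qq]
    exact integrable_finset_sum S fun α _ => integrable_finset_sum S fun β _ =>
      ((integrable_HH α β).const_mul _)
  have hint_qf : Integrable (fun g => q g * f g) μ := by
    rw [hexp_qf]
    exact integrable_finset_sum S fun α _ => integrable_finset_sum S fun β _ =>
      ((integrable_HX α β).const_mul _)
  have hint_ff : Integrable (fun g => f g ^ 2) μ := by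
    rw [hexp_ff]
    exact integrable_finset_sum S fun α _ => integrable_finset_sum S fun β _ =>
      ((integrable_XX α β).const_mul _)
  -- values
  have hval_qq : ∫ g, q g * q g ∂μ = ∑ α ∈ S, c α ^ 2 * Af α := by
    rw [hexp_qq, integral_finset_sum S (fun α _ => integrable_finset_sum S fun β _ =>
      ((integrable_HH α β).const_mul _))]
    refine Finset.sum_congr rfl fun α hα => ?_
    rw [integral_finset_sum S (fun β _ => ((integrable_HH α β).const_mul _))]
    have : ∀ β ∈ S, ∫ g, (c α * c β) * (Hf α g * Hf β g) ∂μ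
        = if α = β then (c α * c β) * Af α else 0 := by
      intro β _
      rw [integral_const_mul, integral_HH α β]
      by_cases h : α = β <;> simp [h]
    rw [Finset.sum_congr rfl this, Finset.sum_ite_eq S α (fun β => (c α * c β) * Af α),
      if_pos hα, sq]
  have hval_qf : ∫ g, q g * f g ∂μ = ∑ α ∈ S, c α ^ 2 * Af α := by
    rw [hexp_qf, integral_finset_sum S (fun α _ => integrable_finset_sum S fun β _ =>
      ((integrable_HX α β).const_mul _))]
    refine Finset.sum_congr rfl fun α hα => ?_
    rw [integral_finset_sum S (fun β _ => ((integrable_HX α β).const_mul _))]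
    have : ∀ β ∈ S, ∫ g, (c α * c β) * (Hf α g * Xf β g) ∂μ
        = if α = β then (c α * c β) * Af α else 0 := by
      intro β hβ
      rw [integral_const_mul, integral_HX α β (hdeg α hα) (hdeg β hβ)]
      by_cases h : α = β <;> simp [h]
    rw [Finset.sum_congr rfl this, Finset.sum_ite_eq S α (fun β => (c α * c β) * Af α),
      if_pos hα, sq]
  -- main inequality
  have hmono : ∫ g, 2 * (q g * f g) - q g * q g ∂μ ≤ ∫ g, f g ^ 2 ∂μ := by
    refine integral_mono ((hint_qf.const_mul 2).sub hint_qq) hint_ff fun g => ?_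
    have := sq_nonneg (f g - q g)
    simp only [Pi.le_def]
    nlinarith
  have hval : ∫ g, 2 * (q g * f g) - q g * q g ∂μ = ∑ α ∈ S, c α ^ 2 * Af α := by
    rw [integral_sub (hint_qf.const_mul 2) hint_qq, integral_const_mul, hval_qf, hval_qq]
    ring
  have hlow : (1 : ℝ) ≤ ∑ α ∈ S, c α ^ 2 * Af α := by
    rw [← hcoef]
    refine Finset.sum_le_sum fun α _ => ?_
    have h1 := one_le_Af α
    nlinarith [sq_nonneg (c α)]
  have h1 : (1 : ℝ) ≤ ∫ g, f g ^ 2 ∂μ := by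
    calc (1:ℝ) ≤ ∑ α ∈ S, c α ^ 2 * Af α := hlow
    _ = ∫ g, 2 * (q g * f g) - q g * q g ∂μ := hval.symm
    _ ≤ ∫ g, f g ^ 2 ∂μ := hmono
  have h2 : (ω : ℝ) ^ (-(ω : ℝ) / 2) ≤ 1 := by
    refine Real.rpow_le_one_of_one_le_of_nonpos (by exact_mod_cast hω) ?_
    have : (0:ℝ) ≤ (ω : ℝ) / 2 := by positivity
    linarith [this]
  calc (ω : ℝ) ^ (-(ω : ℝ) / 2) ≤ 1 := h2
  _ ≤ ∫ g, f g ^ 2 ∂μ := h1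
  _ = ∫ g, MvPolynomial.eval g p ^ 2 ∂(gaussianPi r) := rfl
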